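/- arXiv:1610.05672 — 7 statements merged into one kernel-verified Lean document; each statement's English description precedes it below -/
import Mathlib

section
/- Let (Y_i)_{i≥0} be real-valued random variables on a probability space satisfying E[|Y_0| + Σ_{i=1}^∞ |Y_i − Y_{i−1}|] < ∞. Then the sequence (Y_i) converges almost surely and in L¹ to an integrable limit, so L := lim_{i→∞} E[Y_i] exists; moreover, if N is an ℕ-valued random variable independent of the sequence (Y_i) with P(N ≥ i) > 0 for every i ≥ 1, then the Russian roulette estimator S := Y_0 + Σ_{i=1}^N (Y_i − Y_{i−1})/P(N ≥ i) is integrable and E[S] = L. -/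
open MeasureTheory Filter ENNReal

/-- **Russian roulette truncation is unbiased.**
If `E[|Y 0| + ∑ᵢ |Y (i+1) - Y i|] < ∞`, then the sequence `(Y i)` converges almost surely
and in `L¹` to an integrable limit, the limit `L` of the expectations `E[Y i]` exists, and
for any `ℕ`-valued `N` independent of the sequence with `P(N ≥ i) > 0` for all `i ≥ 1`,
the Russian roulette estimator `S = Y 0 + ∑_{i=1}^{N} (Y i - Y (i-1)) / P(N ≥ i)` is
integrable with `E[S] = L`. -/
theorem russian_roulette_unbiased
    {Ω : Type*} [MeasurableSpace Ω] (μ : Measure Ω) [IsProbabilityMeasure μ]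
    (Y : ℕ → Ω → ℝ) (hYmeas : ∀ i, Measurable (Y i))
    (hsum : ∫⁻ ω, (ENNReal.ofReal |Y 0 ω|
        + ∑' i : ℕ, ENNReal.ofReal |Y (i + 1) ω - Y i ω|) ∂μ ≠ ⊤)
    (N : Ω → ℕ) (hNmeas : Measurable N)
    (hindep : ProbabilityTheory.IndepFun N (fun ω => fun i : ℕ => Y i ω) μ)
    (hNpos : ∀ i : ℕ, 1 ≤ i → 0 < (μ {ω | i ≤ N ω}).toReal) :
    ∃ (Ylim : Ω → ℝ) (L : ℝ),
      Integrable Ylim μ ∧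
      (∀ᵐ ω ∂μ, Tendsto (fun i => Y i ω) atTop (nhds (Ylim ω))) ∧
      Tendsto (fun i => ∫ ω, |Y i ω - Ylim ω| ∂μ) atTop (nhds 0) ∧
      Tendsto (fun i => ∫ ω, Y i ω ∂μ) atTop (nhds L) ∧
      Integrable (fun ω => Y 0 ω + ∑ i ∈ Finset.Icc 1 (N ω),
          (Y i ω - Y (i - 1) ω) / (μ {ω' | i ≤ N ω'}).toReal) μ ∧
      ∫ ω, (Y 0 ω + ∑ i ∈ Finset.Icc 1 (N ω),
          (Y i ω - Y (i - 1) ω) / (μ {ω' | i ≤ N ω'}).toReal) ∂μ = L := by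
  classical
  -- notation
  set p : ℕ → ℝ := fun i => (μ {ω' | i ≤ N ω'}).toReal with hp_def
  set D : ℕ → Ω → ℝ := fun i ω => Y (i + 1) ω - Y i ω with hD_def
  have hDmeas : ∀ i, Measurable (D i) := fun i => (hYmeas (i + 1)).sub (hYmeas i)
  set G : Ω → ℝ≥0∞ := fun ω => (‖Y 0 ω‖₊ : ℝ≥0∞) + ∑' i, (‖D i ω‖₊ : ℝ≥0∞) with hG_def
  have hGsum : ∫⁻ ω, G ω ∂μ ≠ ⊤ := by
    simpa only [hG_def, hD_def, ← enorm_eq_nnnorm, Real.enorm_eq_ofReal_abs] using hsum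
  have hG_meas : Measurable G :=
    ((hYmeas 0).enorm).add (Measurable.ennreal_tsum fun i => (hDmeas i).enorm)
  set g : Ω → ℝ := fun ω => (G ω).toReal with hg_def
  have hg_int : Integrable g μ :=
    integrable_toReal_of_lintegral_ne_top hG_meas.aemeasurable hGsum
  -- integrability of pieces
  have hY0int : Integrable (Y 0) μ := by
    refine ⟨(hYmeas 0).aestronglyMeasurable, ?_⟩
    rw [hasFiniteIntegral_def]
    exact lt_of_le_of_lt (lintegral_mono fun ω => le_self_add) hGsum.lt_top
  have hDle : ∀ i ω, (‖D i ω‖₊ : ℝ≥0∞) ≤ G ω := fun i ω =>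
    le_trans (ENNReal.le_tsum i) le_add_self
  have hDint : ∀ i, Integrable (D i) μ := by
    intro i
    refine ⟨(hDmeas i).aestronglyMeasurable, ?_⟩
    rw [hasFiniteIntegral_def]
    exact lt_of_le_of_lt (lintegral_mono (hDle i)) hGsum.lt_top
  have hDlint : ∑' i, ∫⁻ ω, (‖D i ω‖₊ : ℝ≥0∞) ∂μ ≠ ⊤ := by
    rw [← lintegral_tsum fun i => ((hDmeas i).nnnorm.coe_nnreal_ennreal).aemeasurable]
    exact ne_top_of_le_ne_top hGsum (lintegral_mono fun ω => le_add_self)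
  -- a.e. summability
  have hGae : ∀ᵐ ω ∂μ, G ω < ⊤ := ae_lt_top hG_meas hGsum
  have hsummable : ∀ᵐ ω ∂μ, Summable fun i => ‖D i ω‖₊ := by
    filter_upwards [hGae] with ω hω
    exact ENNReal.tsum_coe_ne_top_iff_summable.mp
      (ne_top_of_le_ne_top hω.ne le_add_self)
  -- the limit
  set Ylim : Ω → ℝ := fun ω => Y 0 ω + ∑' i, D i ω with hYlim_def
  have htel : ∀ ω i, Y i ω = Y 0 ω + ∑ j ∈ Finset.range i, D j ω := by
    intro ω i
    rw [hD_def]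
    rw [Finset.sum_range_sub (fun j => Y j ω)]
    ring
  have htends : ∀ᵐ ω ∂μ, Tendsto (fun i => Y i ω) atTop (nhds (Ylim ω)) := by
    filter_upwards [hsummable] with ω hω
    have hs : Summable fun i => D i ω := Summable.of_nnnorm hω
    have h2 : Tendsto (fun i => Y 0 ω + ∑ j ∈ Finset.range i, D j ω) atTop
        (nhds (Y 0 ω + ∑' i, D i ω)) :=
      tendsto_const_nhds.add hs.hasSum.tendsto_sum_nat
    have hfun : (fun i => Y 0 ω + ∑ j ∈ Finset.range i, D j ω) = fun i => Y i ω :=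
      funext fun i => (htel ω i).symm
    rwa [hfun] at h2
  -- a.e. bounds
  have hbound : ∀ᵐ ω ∂μ, (∀ i, |Y i ω| ≤ g ω) ∧ |Ylim ω| ≤ g ω := by
    filter_upwards [hsummable] with ω hω
    have hsabs : Summable fun i => |D i ω| := by
      have := NNReal.summable_coe.mpr hω
      simpa only [coe_nnnorm, Real.norm_eq_abs] using this
    have hgrepr : g ω = |Y 0 ω| + ∑' i, |D i ω| := by
      show ((‖Y 0 ω‖₊ : ℝ≥0∞) + ∑' i, (‖D i ω‖₊ : ℝ≥0∞)).toReal = _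
      rw [ENNReal.toReal_add ENNReal.coe_ne_top
        (by rw [← ENNReal.coe_tsum hω]; exact ENNReal.coe_ne_top)]
      rw [ENNReal.tsum_toReal_eq fun i => ENNReal.coe_ne_top]
      simp [Real.norm_eq_abs]
    constructor
    · intro i
      rw [htel ω i, hgrepr]
      refine le_trans (abs_add_le _ _) (add_le_add le_rfl ?_)
      refine le_trans (Finset.abs_sum_le_sum_abs _ _) ?_
      exact Summable.sum_le_tsum _ (fun j _ => abs_nonneg _) hsabs
    · rw [hYlim_def, hgrepr]
      refine le_trans (abs_add_le _ _) (add_le_add le_rfl ?_)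
      have := norm_tsum_le_tsum_norm (f := fun i => D i ω)
        (by simpa only [Real.norm_eq_abs] using hsabs)
      simpa only [Real.norm_eq_abs] using this
  have hYlim_aesm : AEStronglyMeasurable Ylim μ :=
    (aemeasurable_of_tendsto_metrizable_ae atTop (fun i => (hYmeas i).aemeasurable)
      htends).aestronglyMeasurable
  have hYlim_int : Integrable Ylim μ := by
    refine Integrable.mono' hg_int hYlim_aesm ?_
    filter_upwards [hbound] with ω h
    simpa [Real.norm_eq_abs] using h.2
  set L : ℝ := ∫ ω, Ylim ω ∂μ with hL_def
  have hEtends : Tendsto (fun i => ∫ ω, Y i ω ∂μ) atTop (nhds L) := by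
    refine tendsto_integral_of_dominated_convergence g
      (fun i => (hYmeas i).aestronglyMeasurable) hg_int ?_ htends
    intro i
    filter_upwards [hbound] with ω h
    simpa [Real.norm_eq_abs] using h.1 i
  have hL1 : Tendsto (fun i => ∫ ω, |Y i ω - Ylim ω| ∂μ) atTop (nhds 0) := by
    have h := tendsto_integral_of_dominated_convergence (μ := μ)
      (F := fun i ω => |Y i ω - Ylim ω|) (f := fun _ => (0 : ℝ))
      (bound := fun ω => 2 * g ω)
      (fun i => by
        have : AEStronglyMeasurable (fun ω => ‖Y i ω - Ylim ω‖) μ :=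
          ((hYmeas i).aestronglyMeasurable.sub hYlim_aesm).norm
        simpa [Real.norm_eq_abs] using this)
      (hg_int.const_mul 2)
      (fun i => by
        filter_upwards [hbound] with ω h
        have h1 : |Y i ω - Ylim ω| ≤ |Y i ω| + |Ylim ω| := abs_sub _ _
        have h2 : |Y i ω| + |Ylim ω| ≤ 2 * g ω := by
          have := add_le_add (h.1 i) h.2; linarith
        simp only [Real.norm_eq_abs, abs_abs]
        exact le_trans h1 h2)
      (by
        filter_upwards [htends] with ω hω
        have h := (hω.sub (tendsto_const_nhds (x := Ylim ω))).abs
        rw [sub_self, abs_zero] at h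
        exact h)
    simpa using h
  -- the estimator
  set B : ℕ → Ω → ℝ := fun i ω => if i + 1 ≤ N ω then 1 else 0 with hB_def
  have hBmeas : ∀ i, Measurable (B i) := by
    intro i
    exact (measurable_from_top (f := fun n : ℕ => if i + 1 ≤ n then (1 : ℝ) else 0)).comp hNmeas
  set T : ℕ → Ω → ℝ := fun i ω => B i ω * D i ω / p (i + 1) with hT_def
  have hTmeas : ∀ i, Measurable (T i) := fun i =>
    ((hBmeas i).mul (hDmeas i)).div_const _
  have hppos : ∀ i, 0 < p (i + 1) := fun i => hNpos (i + 1) (Nat.le_add_left 1 i)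
  have hindepB : ∀ i, ProbabilityTheory.IndepFun (B i) (D i) μ := by
    intro i
    exact hindep.comp (measurable_from_top (f := fun n : ℕ => if i + 1 ≤ n then (1 : ℝ) else 0))
      ((measurable_pi_apply (i + 1)).sub (measurable_pi_apply i))
  have hBint_eq : ∀ i, ∫ ω, B i ω ∂μ = p (i + 1) := by
    intro i
    have hs : MeasurableSet {ω | i + 1 ≤ N ω} :=
      hNmeas (show MeasurableSet {n : ℕ | i + 1 ≤ n} from trivial)
    have hfun : B i = Set.indicator {ω | i + 1 ≤ N ω} (fun _ => (1 : ℝ)) := by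
      funext ω
      simp [hB_def, Set.indicator_apply, Set.mem_setOf_eq]
    rw [hfun, integral_indicator_const (1 : ℝ) hs, smul_eq_mul, mul_one]
    rfl
  have hBbdd : ∀ i ω, ‖B i ω‖ ≤ 1 := by
    intro i ω
    show ‖(if i + 1 ≤ N ω then (1 : ℝ) else 0)‖ ≤ 1
    split <;> simp
  have hBDint : ∀ i, Integrable (fun ω => B i ω * D i ω) μ := fun i =>
    (hDint i).bdd_mul (c := 1) (hBmeas i).aestronglyMeasurable (ae_of_all _ (hBbdd i))
  have hTint : ∀ i, Integrable (T i) μ := fun i => (hBDint i).div_const _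
  have hTint_eq : ∀ i, ∫ ω, T i ω ∂μ = ∫ ω, D i ω ∂μ := by
    intro i
    have hmul : ∫ ω, B i ω * D i ω ∂μ = (∫ ω, B i ω ∂μ) * ∫ ω, D i ω ∂μ :=
      (hindepB i).integral_mul_eq_mul_integral (hBmeas i).aestronglyMeasurable
        (hDmeas i).aestronglyMeasurable
    show ∫ ω, B i ω * D i ω / p (i + 1) ∂μ = _
    rw [integral_div, hmul, hBint_eq]
    exact mul_div_cancel_left₀ _ (hppos i).ne'
  have hTnorm_eq : ∀ i, ∫ ω, ‖T i ω‖ ∂μ = ∫ ω, ‖D i ω‖ ∂μ := by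
    intro i
    have hind2 : ProbabilityTheory.IndepFun (B i) (fun ω => ‖D i ω‖) μ :=
      (hindepB i).comp measurable_id measurable_norm
    have hmul : ∫ ω, B i ω * ‖D i ω‖ ∂μ = (∫ ω, B i ω ∂μ) * ∫ ω, ‖D i ω‖ ∂μ :=
      hind2.integral_mul_eq_mul_integral (hBmeas i).aestronglyMeasurable
        ((hDmeas i).norm).aestronglyMeasurable
    have hnorm : ∀ ω, ‖T i ω‖ = B i ω * ‖D i ω‖ / p (i + 1) := by
      intro ω
      have hb : ‖B i ω‖ = B i ω := by
        show ‖(if i + 1 ≤ N ω then (1 : ℝ) else 0)‖ = (if i + 1 ≤ N ω then (1 : ℝ) else 0)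
        split <;> simp
      show ‖B i ω * D i ω / p (i + 1)‖ = _
      rw [norm_div, norm_mul, hb, Real.norm_eq_abs (p (i + 1)), abs_of_pos (hppos i)]
    simp only [hnorm]
    rw [integral_div, hmul, hBint_eq]
    exact mul_div_cancel_left₀ _ (hppos i).ne'
  have hTlint : ∀ i, ∫⁻ ω, (‖T i ω‖₊ : ℝ≥0∞) ∂μ = ∫⁻ ω, (‖D i ω‖₊ : ℝ≥0∞) ∂μ := by
    intro i
    show ∫⁻ ω, ‖T i ω‖ₑ ∂μ = ∫⁻ ω, ‖D i ω‖ₑ ∂μ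
    rw [← ofReal_integral_norm_eq_lintegral_enorm (hTint i),
      ← ofReal_integral_norm_eq_lintegral_enorm (hDint i), hTnorm_eq i]
  have hTsum_lint : ∑' i, ∫⁻ ω, (‖T i ω‖₊ : ℝ≥0∞) ∂μ ≠ ⊤ := by
    simp only [hTlint]
    exact hDlint
  have hT_zero : ∀ ω i, N ω ≤ i → T i ω = 0 := by
    intro ω i h
    show (if i + 1 ≤ N ω then (1 : ℝ) else 0) * D i ω / p (i + 1) = 0
    rw [if_neg (by omega)]
    simp
  have hS_eq : ∀ ω, (∑ i ∈ Finset.Icc 1 (N ω), (Y i ω - Y (i - 1) ω) / p i)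
      = ∑' i, T i ω := by
    intro ω
    rw [tsum_eq_sum (s := Finset.range (N ω))
      (fun i hi => hT_zero ω i (Nat.le_of_not_lt fun h => hi (Finset.mem_range.mpr h)))]
    rw [← Finset.Ico_add_one_right_eq_Icc, Finset.sum_Ico_eq_sum_range]
    refine Finset.sum_congr (by norm_num) ?_
    intro j hj
    have hj' : j + 1 ≤ N ω := Finset.mem_range.mp hj
    show (Y (1 + j) ω - Y (1 + j - 1) ω) / p (1 + j)
      = (if j + 1 ≤ N ω then (1 : ℝ) else 0) * D j ω / p (j + 1)
    rw [if_pos hj', one_mul]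
    have h1 : 1 + j = j + 1 := by omega
    have h2 : 1 + j - 1 = j := by omega
    rw [h2, h1]
  have hSmeas' : Measurable (fun ω => ∑ i ∈ Finset.Icc 1 (N ω),
      (Y i ω - Y (i - 1) ω) / p i) := by
    have hF : Measurable (fun q : Ω × ℕ => ∑ i ∈ Finset.Icc 1 q.2,
        (Y i q.1 - Y (i - 1) q.1) / p i) :=
      measurable_from_prod_countable_left fun n => by
        exact Finset.measurable_sum (Finset.Icc 1 n) fun i _ =>
          ((hYmeas i).sub (hYmeas (i - 1))).div_const (p i)
    exact hF.comp (measurable_id.prodMk hNmeas)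
  have hTsum_meas : Measurable (fun ω => ∑' i, T i ω) := by
    have hfun : (fun ω => ∑' i, T i ω)
        = fun ω => ∑ i ∈ Finset.Icc 1 (N ω), (Y i ω - Y (i - 1) ω) / p i :=
      funext fun ω => (hS_eq ω).symm
    rw [hfun]
    exact hSmeas'
  have hTsummable : ∀ ω, Summable fun i => ‖T i ω‖₊ := by
    intro ω
    refine summable_of_ne_finset_zero (s := Finset.range (N ω)) fun i hi => ?_
    rw [hT_zero ω i (Nat.le_of_not_lt fun h => hi (Finset.mem_range.mpr h))]
    simp
  have hTsum_int : Integrable (fun ω => ∑' i, T i ω) μ := by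
    refine ⟨hTsum_meas.aestronglyMeasurable, ?_⟩
    rw [hasFiniteIntegral_def]
    have hb : ∀ ω, (‖∑' i, T i ω‖₊ : ℝ≥0∞) ≤ ∑' i, (‖T i ω‖₊ : ℝ≥0∞) := by
      intro ω
      rw [← ENNReal.coe_tsum (hTsummable ω)]
      exact ENNReal.coe_le_coe.mpr (nnnorm_tsum_le (hTsummable ω))
    refine lt_of_le_of_lt (lintegral_mono hb) ?_
    rw [lintegral_tsum fun i => ((hTmeas i).nnnorm.coe_nnreal_ennreal).aemeasurable]
    exact hTsum_lint.lt_top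
  have hDsum_int : Integrable (fun ω => ∑' i, D i ω) μ := by
    have hfun : (fun ω => ∑' i, D i ω) = fun ω => Ylim ω - Y 0 ω := by
      funext ω
      rw [hYlim_def]
      ring
    rw [hfun]
    exact hYlim_int.sub hY0int
  have hL_eq : L = ∫ ω, Y 0 ω ∂μ + ∑' i, ∫ ω, D i ω ∂μ := by
    rw [hL_def, hYlim_def]
    rw [integral_add hY0int hDsum_int,
      integral_tsum (fun i => (hDmeas i).aestronglyMeasurable) hDlint]
  refine ⟨Ylim, L, hYlim_int, htends, hL1, hEtends, ?_, ?_⟩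
  · have hfun : (fun ω => Y 0 ω + ∑ i ∈ Finset.Icc 1 (N ω),
        (Y i ω - Y (i - 1) ω) / p i) = fun ω => Y 0 ω + ∑' i, T i ω :=
      funext fun ω => by rw [hS_eq ω]
    rw [hfun]
    exact hY0int.add hTsum_int
  · have hfun : (fun ω => Y 0 ω + ∑ i ∈ Finset.Icc 1 (N ω),
        (Y i ω - Y (i - 1) ω) / p i) = fun ω => Y 0 ω + ∑' i, T i ω :=
      funext fun ω => by rw [hS_eq ω]
    rw [hfun]
    rw [integral_add hY0int hTsum_int,
      integral_tsum (fun i => (hTmeas i).aestronglyMeasurable) hTsum_lint]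
    rw [tsum_congr hTint_eq, ← hL_eq]
end

section
/- Let (Y_i)_{i≥0} and (Ỹ_i)_{i≥0} be sequences of integrable real-valued random variables on a probability space such that E[Ỹ_i] = E[Y_i] for every i ≥ 0, the limit L := lim_{i→∞} E[Y_i] exists, and E[|Y_0| + Σ_{i=1}^∞ |Y_i − Ỹ_{i−1}|] < ∞. Let N be an ℕ-valued random variable independent of the pair of sequences with P(N ≥ i) > 0 for every i ≥ 1. Then the coupled Russian roulette estimator S := Y_0 + Σ_{i=1}^N (Y_i − Ỹ_{i−1})/P(N ≥ i) is integrable and E[S] = L. -/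
open MeasureTheory Filter
open ProbabilityTheory

/-- **Coupled Russian roulette truncation is unbiased.**
If `(Y i)` and `(Ỹ i)` are integrable with `E[Ỹ i] = E[Y i]` for all `i`, the limit
`L = lim E[Y i]` exists, and `E[|Y 0| + ∑ᵢ |Y (i+1) - Ỹ i|] < ∞`, then for any `ℕ`-valued
`N` independent of the pair of sequences with `P(N ≥ i) > 0` for all `i ≥ 1`, the coupled
Russian roulette estimator `S = Y 0 + ∑_{i=1}^{N} (Y i - Ỹ (i-1)) / P(N ≥ i)` is
integrable with `E[S] = L`. -/
theorem coupled_russian_roulette_unbiased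
    {Ω : Type*} [MeasurableSpace Ω] (μ : Measure Ω) [IsProbabilityMeasure μ]
    (Y Yt : ℕ → Ω → ℝ) (hYmeas : ∀ i, Measurable (Y i)) (hYtmeas : ∀ i, Measurable (Yt i))
    (hYint : ∀ i, Integrable (Y i) μ) (hYtint : ∀ i, Integrable (Yt i) μ)
    (hsamemean : ∀ i, ∫ ω, Yt i ω ∂μ = ∫ ω, Y i ω ∂μ)
    (L : ℝ) (hL : Tendsto (fun i => ∫ ω, Y i ω ∂μ) atTop (nhds L))
    (hsum : ∫⁻ ω, (ENNReal.ofReal |Y 0 ω|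
        + ∑' i : ℕ, ENNReal.ofReal |Y (i + 1) ω - Yt i ω|) ∂μ ≠ ⊤)
    (N : Ω → ℕ) (hNmeas : Measurable N)
    (hindep : ProbabilityTheory.IndepFun N
      (fun ω => ((fun i : ℕ => Y i ω), (fun i : ℕ => Yt i ω))) μ)
    (hNpos : ∀ i : ℕ, 1 ≤ i → 0 < (μ {ω | i ≤ N ω}).toReal) :
    Integrable (fun ω => Y 0 ω + ∑ i ∈ Finset.Icc 1 (N ω),
        (Y i ω - Yt (i - 1) ω) / (μ {ω' | i ≤ N ω'}).toReal) μ ∧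
    ∫ ω, (Y 0 ω + ∑ i ∈ Finset.Icc 1 (N ω),
        (Y i ω - Yt (i - 1) ω) / (μ {ω' | i ≤ N ω'}).toReal) ∂μ = L := by
  classical
  -- abbreviations
  set D : ℕ → Ω → ℝ := fun j ω => Y (j + 1) ω - Yt j ω with hD
  set P : ℕ → ℝ := fun j => (μ {ω' | j + 1 ≤ N ω'}).toReal with hP
  set X : ℕ → Ω → ℝ := fun j ω => if j + 1 ≤ N ω then (1 : ℝ) else 0 with hX
  set g : ℕ → Ω → ℝ := fun j ω => X j ω * (D j ω / P j) with hg
  have hA : ∀ i : ℕ, MeasurableSet {ω | i ≤ N ω} := fun i => hNmeas measurableSet_Ici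
  have hDint : ∀ j, Integrable (D j) μ := fun j => (hYint (j + 1)).sub (hYtint j)
  have hDmeas : ∀ j, Measurable (D j) := fun j => (hYmeas (j + 1)).sub (hYtmeas j)
  have hPpos : ∀ j : ℕ, 0 < P j := fun j => hNpos (j + 1) (Nat.le_add_left 1 j)
  have hXmeas : ∀ j, Measurable (X j) := fun j =>
    Measurable.ite (hA (j + 1)) measurable_const measurable_const
  have hXint : ∀ j, Integrable (X j) μ := by
    intro j
    refine (integrable_const (1 : ℝ)).mono' (hXmeas j).aestronglyMeasurable ?_
    filter_upwards with ω
    simp only [hX]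
    split_ifs <;> simp
  have hXintegral : ∀ j, ∫ ω, X j ω ∂μ = P j := by
    intro j
    have e : X j = Set.indicator {ω | j + 1 ≤ N ω} (fun _ => (1 : ℝ)) := by
      funext ω
      by_cases h : j + 1 ≤ N ω <;> simp [hX, Set.indicator_apply, h]
    rw [e, integral_indicator_const (1 : ℝ) (hA (j + 1)), smul_eq_mul, mul_one]
    rfl
  -- independence of the indicator and the increment
  have hindepD : ∀ j, IndepFun (X j) (fun ω => D j ω / P j) μ := by
    intro j
    have hφ : Measurable (fun n : ℕ => if j + 1 ≤ n then (1 : ℝ) else 0) :=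
      measurable_from_top
    have hψ : Measurable (fun z : (ℕ → ℝ) × (ℕ → ℝ) => (z.1 (j + 1) - z.2 j) / P j) :=
      (((measurable_pi_apply (j + 1)).comp measurable_fst).sub
        ((measurable_pi_apply j).comp measurable_snd)).div_const _
    exact hindep.comp hφ hψ
  have hindepDabs : ∀ j, IndepFun (X j) (fun ω => |D j ω| / P j) μ := by
    intro j
    have hφ : Measurable (fun n : ℕ => if j + 1 ≤ n then (1 : ℝ) else 0) :=
      measurable_from_top
    have hψ : Measurable (fun z : (ℕ → ℝ) × (ℕ → ℝ) => |z.1 (j + 1) - z.2 j| / P j) :=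
      ((((measurable_pi_apply (j + 1)).comp measurable_fst).sub
        ((measurable_pi_apply j).comp measurable_snd)).abs).div_const _
    exact hindep.comp hφ hψ
  have hgint : ∀ j, Integrable (g j) μ := fun j =>
    (hindepD j).integrable_mul (hXint j) ((hDint j).div_const _)
  have hgmeas : ∀ j, Measurable (g j) := fun j =>
    (hXmeas j).mul ((hDmeas j).div_const _)
  -- integral identities
  have hgD : ∀ j, ∫ ω, g j ω ∂μ = ∫ ω, D j ω ∂μ := by
    intro j
    have h := (hindepD j).integral_fun_mul_eq_mul_integral (hXint j).aestronglyMeasurable ((hDint j).div_const _).aestronglyMeasurable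
    calc ∫ ω, g j ω ∂μ = (∫ ω, X j ω ∂μ) * ∫ ω, D j ω / P j ∂μ := h
      _ = P j * ((∫ ω, D j ω ∂μ) / P j) := by rw [hXintegral j, integral_div]
      _ = ∫ ω, D j ω ∂μ := by rw [mul_comm, div_mul_cancel₀ _ (hPpos j).ne']
  have hgabs : ∀ j, ∫ ω, |g j ω| ∂μ = ∫ ω, |D j ω| ∂μ := by
    intro j
    have e : (fun ω => |g j ω|) = fun ω => X j ω * (|D j ω| / P j) := by
      funext ω
      by_cases h : j < N ω <;>
        simp [hg, hX, h, abs_div, abs_of_pos (hPpos j)]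
    have h := (hindepDabs j).integral_fun_mul_eq_mul_integral (hXint j).aestronglyMeasurable ((hDint j).abs.div_const _).aestronglyMeasurable
    calc ∫ ω, |g j ω| ∂μ = ∫ ω, X j ω * (|D j ω| / P j) ∂μ := by rw [e]
      _ = (∫ ω, X j ω ∂μ) * ∫ ω, |D j ω| / P j ∂μ := h
      _ = P j * ((∫ ω, |D j ω| ∂μ) / P j) := by rw [hXintegral j, integral_div]
      _ = ∫ ω, |D j ω| ∂μ := by rw [mul_comm, div_mul_cancel₀ _ (hPpos j).ne']
  -- the summability input
  set B : ℕ → ENNReal := fun j => ∫⁻ ω, ENNReal.ofReal |D j ω| ∂μ with hB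
  have hmeas0 : Measurable (fun ω => ENNReal.ofReal |Y 0 ω|) :=
    ((hYmeas 0).abs).ennreal_ofReal
  have hmeasD : ∀ j, Measurable (fun ω => ENNReal.ofReal |D j ω|) := fun j =>
    ((hDmeas j).abs).ennreal_ofReal
  have hBsum : ∑' j, B j ≠ ⊤ := by
    rw [lintegral_add_left hmeas0] at hsum
    have h2 := (ENNReal.add_ne_top.mp hsum).2
    rwa [lintegral_tsum (fun j => (hmeasD j).aemeasurable)] at h2
  have hDB : ∀ j, ∫ ω, |D j ω| ∂μ = (B j).toReal := by
    intro j
    have h := ofReal_integral_eq_lintegral_ofReal (hDint j).abs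
      (Filter.Eventually.of_forall fun ω => abs_nonneg _)
    simp only [hB]
    rw [← h, ENNReal.toReal_ofReal (integral_nonneg fun ω => abs_nonneg _)]
  have hglint : ∀ j, ∫⁻ ω, ‖g j ω‖₊ ∂μ = B j := by
    intro j
    rw [show (∫⁻ ω, (‖g j ω‖₊ : ENNReal) ∂μ) = ∫⁻ ω, ‖g j ω‖ₑ ∂μ from rfl,
      ← ofReal_integral_norm_eq_lintegral_enorm (hgint j)]
    simp_rw [Real.norm_eq_abs]
    rw [hgabs j, hDB j, ENNReal.ofReal_toReal (ENNReal.ne_top_of_tsum_ne_top hBsum j)]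
  have hgsum : ∑' j, ∫⁻ ω, ‖g j ω‖₊ ∂μ ≠ ⊤ := by
    simp_rw [hglint]; exact hBsum
  -- the pointwise identity between the roulette sum and the tsum
  have key : ∀ ω, (∑ i ∈ Finset.Icc 1 (N ω),
      (Y i ω - Yt (i - 1) ω) / (μ {ω' | i ≤ N ω'}).toReal) = ∑' j, g j ω := by
    intro ω
    have h0 : ∀ j ∉ Finset.range (N ω), g j ω = 0 := by
      intro j hj
      have hj' : ¬ (j + 1 ≤ N ω) := by
        rw [Finset.mem_range] at hj; omega
      simp [hg, hX, show ¬ j < N ω by omega]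
    rw [tsum_eq_sum h0]
    refine Finset.sum_nbij' (fun i => i - 1) (fun j => j + 1) ?_ ?_ ?_ ?_ ?_
    · intro i hi
      rw [Finset.mem_Icc] at hi
      rw [Finset.mem_range]
      omega
    · intro j hj
      rw [Finset.mem_range] at hj
      rw [Finset.mem_Icc]
      omega
    · intro i hi
      rw [Finset.mem_Icc] at hi
      omega
    · intro j _
      omega
    · intro i hi
      rw [Finset.mem_Icc] at hi
      have h1 : i - 1 + 1 = i := by omega
      have h2 : i - 1 + 1 ≤ N ω := by omega
      simp only [hg, hX, hD, hP, h1, if_pos h2, one_mul]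
      rw [if_pos hi.2, one_mul]
  -- integrability of the tsum part
  have hTptwise : ∀ ω, Tendsto (fun n => ∑ j ∈ Finset.range n, g j ω) atTop
      (nhds (∑' j, g j ω)) := by
    intro ω
    have h0 : ∀ j ∉ Finset.range (N ω), g j ω = 0 := by
      intro j hj
      have hj' : ¬ (j + 1 ≤ N ω) := by
        rw [Finset.mem_range] at hj; omega
      simp [hg, hX, show ¬ j < N ω by omega]
    rw [tsum_eq_sum h0]
    apply tendsto_atTop_of_eventually_const (i₀ := N ω)
    intro n hn
    refine (Finset.sum_subset (Finset.range_subset_range.mpr hn) ?_).symm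
    intro j _ hj
    exact h0 j hj
  have hTmeas : Measurable (fun ω => ∑' j, g j ω) := by
    apply measurable_of_tendsto_metrizable (f := fun n ω => ∑ j ∈ Finset.range n, g j ω)
    · intro n
      exact Finset.measurable_sum _ fun j _ => hgmeas j
    · rw [tendsto_pi_nhds]
      exact hTptwise
  have hTint : Integrable (fun ω => ∑' j, g j ω) μ := by
    refine ⟨hTmeas.aestronglyMeasurable, ?_⟩
    show (∫⁻ ω, ‖∑' j, g j ω‖₊ ∂μ) < ⊤
    calc ∫⁻ ω, ‖∑' j, g j ω‖₊ ∂μ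
        ≤ ∫⁻ ω, ∑' j, (‖g j ω‖₊ : ENNReal) ∂μ := by
          apply lintegral_mono
          intro ω
          dsimp only
          by_cases hs : Summable (fun j => ‖g j ω‖₊)
          · rw [← ENNReal.coe_tsum hs]
            exact ENNReal.coe_le_coe.mpr (nnnorm_tsum_le hs)
          · have : ¬ Summable (fun j => g j ω) := by
              intro h
              exact hs (by simpa [← NNReal.summable_coe, coe_nnnorm, Real.norm_eq_abs]
                using h.abs)
            rw [tsum_eq_zero_of_not_summable this]
            simp
      _ = ∑' j, ∫⁻ ω, ‖g j ω‖₊ ∂μ :=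
          lintegral_tsum fun j => (hgmeas j).enorm.aemeasurable
      _ < ⊤ := lt_top_iff_ne_top.mpr hgsum
  -- telescoping limit
  set a : ℕ → ℝ := fun n => ∫ ω, Y n ω ∂μ with ha
  have hDa : ∀ j, ∫ ω, D j ω ∂μ = a (j + 1) - a j := by
    intro j
    rw [hD]
    rw [integral_sub (hYint (j + 1)) (hYtint j), hsamemean j]
  have hfsummable : Summable (fun j => a (j + 1) - a j) := by
    apply Summable.of_norm
    apply Summable.of_nonneg_of_le (fun j => norm_nonneg _) (fun j => ?_)
      (ENNReal.summable_toReal hBsum)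
    rw [← hDa j, ← hDB j]
    calc ‖∫ ω, D j ω ∂μ‖ ≤ ∫ ω, ‖D j ω‖ ∂μ := norm_integral_le_integral_norm _
      _ = ∫ ω, |D j ω| ∂μ := by simp [Real.norm_eq_abs]
  have htelescope : ∑' j, (a (j + 1) - a j) = L - a 0 := by
    have h1 := hfsummable.hasSum.tendsto_sum_nat
    have h2 : Tendsto (fun n => ∑ j ∈ Finset.range n, (a (j + 1) - a j)) atTop
        (nhds (L - a 0)) := by
      simp_rw [Finset.sum_range_sub a]
      exact hL.sub tendsto_const_nhds
    exact tendsto_nhds_unique h1 h2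
  -- put things together
  have hSrw : (fun ω => Y 0 ω + ∑ i ∈ Finset.Icc 1 (N ω),
      (Y i ω - Yt (i - 1) ω) / (μ {ω' | i ≤ N ω'}).toReal)
      = fun ω => Y 0 ω + ∑' j, g j ω := by
    funext ω; rw [key ω]
  constructor
  · rw [hSrw]
    exact (hYint 0).add hTint
  · rw [hSrw]  -- hope this rewrites under the integral? it's the same function
    rw [integral_add (hYint 0) hTint]
    rw [integral_tsum (fun j => (hgmeas j).aestronglyMeasurable) hgsum]
    have : ∑' j, ∫ ω, g j ω ∂μ = L - a 0 := by
      rw [← htelescope]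
      exact tsum_congr fun j => by rw [hgD j, hDa j]
    rw [this]
    simp [ha]
end

section
/- Let w₀, v₁, v₂, … be positive reals, u₁, u₂, … ∈ [0,1], and define the forward-coupled Metropolis weight chains W and W̃ from them. If there exists j with 2 ≤ j ≤ i and v_j ≥ max{w₀, v₁}, then W_i = W̃_{i−1}; that is, proposing a weight at least as large as both the initial weight and the first proposed weight forces the two chains to couple. -/
open MeasureTheory

/-- The Metropolis weight update: from current weight `w`, proposed weight `w'`, and
uniform draw `u`, accept the proposal iff `u ≤ min 1 (w'/w)`. -/
noncomputable def metroF (w w' u : ℝ) : ℝ := if u ≤ min 1 (w' / w) then w' else w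

/-- The forward Metropolis weight chain: `W 0 = w0`, `W (i+1) = f (W i) (v (i+1)) (u (i+1))`. -/
noncomputable def fwdChain (w0 : ℝ) (v u : ℕ → ℝ) : ℕ → ℝ
  | 0 => w0
  | i + 1 => metroF (fwdChain w0 v u i) (v (i + 1)) (u (i + 1))

/-- The forward-coupled tilde chain: it skips the first proposal, so
`W̃ 0 = w0`, `W̃ (i+1) = f (W̃ i) (v (i+2)) (u (i+2))`; it shares each pair `(v j, u j)`
with the main chain whenever it processes proposal `j`. -/
noncomputable def fwdChainT (w0 : ℝ) (v u : ℕ → ℝ) : ℕ → ℝ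
  | 0 => w0
  | i + 1 => metroF (fwdChainT w0 v u i) (v (i + 2)) (u (i + 2))

lemma metroF_pos {w w' u : ℝ} (hw : 0 < w) (hw' : 0 < w') : 0 < metroF w w' u := by
  unfold metroF; split <;> assumption

lemma metroF_mem (w w' u : ℝ) : metroF w w' u = w' ∨ metroF w w' u = w := by
  unfold metroF; split <;> simp

lemma metroF_accept {w w' u : ℝ} (hw : 0 < w) (hww' : w ≤ w') (hu : u ≤ 1) :
    metroF w w' u = w' := by
  unfold metroF
  rw [if_pos]
  have h1 : (1 : ℝ) ≤ w' / w := (one_le_div hw).mpr hww'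
  rw [min_eq_left h1]
  exact hu

lemma fwdChain_pos (w0 : ℝ) (v u : ℕ → ℝ) (hw0 : 0 < w0) (hv : ∀ i, 0 < v i) :
    ∀ n, 0 < fwdChain w0 v u n
  | 0 => hw0
  | n + 1 => metroF_pos (fwdChain_pos w0 v u hw0 hv n) (hv _)

lemma fwdChainT_pos (w0 : ℝ) (v u : ℕ → ℝ) (hw0 : 0 < w0) (hv : ∀ i, 0 < v i) :
    ∀ n, 0 < fwdChainT w0 v u n
  | 0 => hw0
  | n + 1 => metroF_pos (fwdChainT_pos w0 v u hw0 hv n) (hv _)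

/-- Invariant: at each step `k`, either the chains have coupled or both are bounded
by `max w0 (v 1)`. -/
lemma fwd_invariant (w0 : ℝ) (v u : ℕ → ℝ) (hw0 : 0 < w0) (hv : ∀ i, 0 < v i)
    (hu : ∀ i, u i ∈ Set.Icc (0 : ℝ) 1) :
    ∀ k, fwdChain w0 v u (k + 1) = fwdChainT w0 v u k ∨
      (fwdChain w0 v u (k + 1) ≤ max w0 (v 1) ∧ fwdChainT w0 v u k ≤ max w0 (v 1)) := by
  intro k
  induction k with
  | zero =>
    right
    constructor
    · show metroF w0 (v 1) (u 1) ≤ _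
      rcases metroF_mem w0 (v 1) (u 1) with h | h <;> rw [h]
      · exact le_max_right _ _
      · exact le_max_left _ _
    · exact le_max_left _ _
  | succ k ih =>
    rcases ih with heq | ⟨hW, hWt⟩
    · left
      show metroF _ (v (k + 2)) (u (k + 2)) = metroF _ (v (k + 2)) (u (k + 2))
      rw [heq]
    · by_cases hvk : v (k + 2) ≤ max w0 (v 1)
      · right
        constructor
        · show metroF _ (v (k + 2)) (u (k + 2)) ≤ _
          rcases metroF_mem (fwdChain w0 v u (k + 1)) (v (k + 2)) (u (k + 2)) with h | h <;>
            rw [h]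
          · exact hvk
          · exact hW
        · show metroF _ (v (k + 2)) (u (k + 2)) ≤ _
          rcases metroF_mem (fwdChainT w0 v u k) (v (k + 2)) (u (k + 2)) with h | h <;>
            rw [h]
          · exact hvk
          · exact hWt
      · left
        push_neg at hvk
        have hu2 := (hu (k + 2)).2
        show metroF _ (v (k + 2)) (u (k + 2)) = metroF _ (v (k + 2)) (u (k + 2))
        rw [metroF_accept (fwdChain_pos w0 v u hw0 hv (k + 1)) (hW.trans hvk.le) hu2,
          metroF_accept (fwdChainT_pos w0 v u hw0 hv k) (hWt.trans hvk.le) hu2]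

/-- Once coupled, the chains stay coupled. -/
lemma fwd_persist (w0 : ℝ) (v u : ℕ → ℝ) (k : ℕ)
    (heq : fwdChain w0 v u (k + 1) = fwdChainT w0 v u k) :
    ∀ d, fwdChain w0 v u (k + 1 + d) = fwdChainT w0 v u (k + d) := by
  intro d
  induction d with
  | zero => simpa using heq
  | succ d ih =>
    show metroF (fwdChain w0 v u (k + 1 + d)) (v (k + 1 + d + 1)) (u (k + 1 + d + 1)) =
      metroF (fwdChainT w0 v u (k + d)) (v (k + d + 2)) (u (k + d + 2))
    rw [ih]
    congr 2 <;> omega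

/-- **A dominating proposal forces forward coupling.** If some proposal `v j` with
`2 ≤ j ≤ i` satisfies `v j ≥ max (w0) (v 1)`, then the forward-coupled chains have
coupled by step `i`: `W i = W̃ (i-1)`. -/
theorem fwd_coupling_of_dominating_proposal
    (w0 : ℝ) (v u : ℕ → ℝ) (hw0 : 0 < w0) (hv : ∀ i, 0 < v i)
    (hu : ∀ i, u i ∈ Set.Icc (0 : ℝ) 1) (i j : ℕ) (hj2 : 2 ≤ j) (hji : j ≤ i)
    (hvj : max w0 (v 1) ≤ v j) :
    fwdChain w0 v u i = fwdChainT w0 v u (i - 1) := by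
  obtain ⟨m, rfl⟩ : ∃ m, j = m + 2 := ⟨j - 2, by omega⟩
  -- coupling at step j = m + 2
  have hcouple : fwdChain w0 v u (m + 2) = fwdChainT w0 v u (m + 1) := by
    rcases fwd_invariant w0 v u hw0 hv hu m with heq | ⟨hW, hWt⟩
    · show metroF _ (v (m + 2)) (u (m + 2)) = metroF _ (v (m + 2)) (u (m + 2))
      rw [heq]
    · have hu2 := (hu (m + 2)).2
      show metroF _ (v (m + 2)) (u (m + 2)) = metroF _ (v (m + 2)) (u (m + 2))
      rw [metroF_accept (fwdChain_pos w0 v u hw0 hv (m + 1)) (hW.trans hvj) hu2,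
        metroF_accept (fwdChainT_pos w0 v u hw0 hv m) (hWt.trans hvj) hu2]
  have := fwd_persist w0 v u (m + 1) hcouple (i - (m + 2))
  have h1 : m + 1 + 1 + (i - (m + 2)) = i := by omega
  have h2 : m + 1 + (i - (m + 2)) = i - 1 := by omega
  rwa [h1, h2] at this
end

section
/- Let w₀, v₁, v₂, … be i.i.d. random variables taking values in a finite set 𝒲 of positive reals, with every element of 𝒲 attained with positive probability; write w_max = max 𝒲, w_min = min 𝒲, and q = P(v₁ = w_max) > 0. Let u₁, u₂, … be arbitrary random variables with values in [0,1], and define the forward-coupled Metropolis weight chains W and W̃ from them. Then for every i ≥ 2, E[|1/W_i − 1/W̃_{i−1}|] ≤ (1 − q)^{i−1} · (1/w_min − 1/w_max), and consequently Σ_{i=1}^∞ E[|1/W_i − 1/W̃_{i−1}|] < ∞. -/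
open MeasureTheory

lemma metroF_mem_s6 {w w' x : ℝ} {W : Finset ℝ} (hw : w ∈ W) (hw' : w' ∈ W) :
    metroF w w' x ∈ W := by
  unfold metroF; split <;> assumption

lemma fwdChain_mem {W : Finset ℝ} {w0 : ℝ} {v u : ℕ → ℝ} (h0 : w0 ∈ W)
    (hv : ∀ k, v k ∈ W) : ∀ i, fwdChain w0 v u i ∈ W
  | 0 => h0
  | i + 1 => metroF_mem_s6 (fwdChain_mem h0 hv i) (hv (i + 1))

lemma fwdChainT_mem {W : Finset ℝ} {w0 : ℝ} {v u : ℕ → ℝ} (h0 : w0 ∈ W)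
    (hv : ∀ k, v k ∈ W) : ∀ i, fwdChainT w0 v u i ∈ W
  | 0 => h0
  | i + 1 => metroF_mem_s6 (fwdChainT_mem h0 hv i) (hv (i + 2))

lemma metroF_accept_s6 {w w' x : ℝ} (hw : 0 < w) (hle : w ≤ w') (hx : x ≤ 1) :
    metroF w w' x = w' := by
  unfold metroF
  rw [if_pos (le_min hx (hx.trans ((one_le_div hw).mpr hle)))]

/-- Coupling: once a `wmax` proposal with index `j+2` occurs, the chains agree:
`fwdChain (m+2) = fwdChainT (m+1)` for all `m ≥ j`. -/
lemma fce_coupled {W : Finset ℝ} (hWpos : ∀ x ∈ W, 0 < x) {wmax : ℝ}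
    (hmax : ∀ x ∈ W, x ≤ wmax) {w0 : ℝ} {v u : ℕ → ℝ} (h0 : w0 ∈ W)
    (hv : ∀ k, v k ∈ W) (hu : ∀ k, u k ≤ 1) {j : ℕ} (hj : v (j + 2) = wmax) :
    ∀ m, j ≤ m → fwdChain w0 v u (m + 2) = fwdChainT w0 v u (m + 1) := by
  intro m hm
  induction m, hm using Nat.le_induction with
  | base =>
      show metroF (fwdChain w0 v u (j+1)) (v (j+2)) (u (j+2))
        = metroF (fwdChainT w0 v u j) (v (j+2)) (u (j+2))
      rw [metroF_accept_s6 (hWpos _ (fwdChain_mem h0 hv (j+1)))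
          (hj ▸ hmax _ (fwdChain_mem h0 hv (j+1))) (hu _),
        metroF_accept_s6 (hWpos _ (fwdChainT_mem h0 hv j))
          (hj ▸ hmax _ (fwdChainT_mem h0 hv j)) (hu _)]
  | succ m _ ih =>
      show metroF (fwdChain w0 v u (m+2)) (v (m+3)) (u (m+3))
        = metroF (fwdChainT w0 v u (m+1)) (v (m+3)) (u (m+3))
      rw [ih]

lemma fwdChain_meas {Ω : Type*} [MeasurableSpace Ω] {v u : ℕ → Ω → ℝ}
    (hv : ∀ k, Measurable (v k)) (hu : ∀ k, Measurable (u k)) :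
    ∀ i, Measurable fun ω => fwdChain (v 0 ω) (fun k => v k ω) (fun k => u k ω) i
  | 0 => hv 0
  | i + 1 => by
      have ih := fwdChain_meas hv hu i
      show Measurable fun ω =>
        metroF (fwdChain (v 0 ω) (fun k => v k ω) (fun k => u k ω) i) (v (i+1) ω) (u (i+1) ω)
      unfold metroF
      exact Measurable.ite
        (measurableSet_le (hu (i+1)) (measurable_const.min ((hv (i+1)).div ih)))
        (hv (i+1)) ih

lemma fwdChainT_meas {Ω : Type*} [MeasurableSpace Ω] {v u : ℕ → Ω → ℝ}
    (hv : ∀ k, Measurable (v k)) (hu : ∀ k, Measurable (u k)) :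
    ∀ i, Measurable fun ω => fwdChainT (v 0 ω) (fun k => v k ω) (fun k => u k ω) i
  | 0 => hv 0
  | i + 1 => by
      have ih := fwdChainT_meas hv hu i
      show Measurable fun ω =>
        metroF (fwdChainT (v 0 ω) (fun k => v k ω) (fun k => u k ω) i) (v (i+2) ω) (u (i+2) ω)
      unfold metroF
      exact Measurable.ite
        (measurableSet_le (hu (i+2)) (measurable_const.min ((hv (i+2)).div ih)))
        (hv (i+2)) ih

/-- **Geometric decay of coupling errors on a finite weight set.** If the i.i.d. weights
`w0 = v 0, v 1, v 2, …` take values in a finite set `W` of positive reals with every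
element attained with positive probability, and `q = P(v 1 = max W)`, then for all
`i ≥ 2`, `E[|1/W i - 1/W̃ (i-1)|] ≤ (1-q)^(i-1) * (1/min W - 1/max W)`, and the series
`∑_{i≥1} E[|1/W i - 1/W̃ (i-1)|]` converges. -/
theorem fce_finite_state_summable
    {Ω : Type*} [MeasurableSpace Ω] (μ : Measure Ω) [IsProbabilityMeasure μ]
    (W : Finset ℝ) (hWne : W.Nonempty) (hWpos : ∀ x ∈ W, 0 < x)
    (v u : ℕ → Ω → ℝ)
    (hvmeas : ∀ k, Measurable (v k)) (humeas : ∀ k, Measurable (u k))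
    (hvW : ∀ k ω, v k ω ∈ W) (hu : ∀ k ω, u k ω ∈ Set.Icc (0 : ℝ) 1)
    (hindep : ProbabilityTheory.iIndepFun v μ)
    (hident : ∀ k, ProbabilityTheory.IdentDistrib (v k) (v 0) μ μ)
    (hatom : ∀ x ∈ W, 0 < μ {ω | v 0 ω = x}) :
    (∀ i : ℕ, 2 ≤ i →
      ∫ ω, |1 / fwdChain (v 0 ω) (fun k => v k ω) (fun k => u k ω) i
        - 1 / fwdChainT (v 0 ω) (fun k => v k ω) (fun k => u k ω) (i - 1)| ∂μ
      ≤ (1 - (μ {ω | v 1 ω = W.max' hWne}).toReal) ^ (i - 1)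
          * (1 / W.min' hWne - 1 / W.max' hWne)) ∧
    Summable (fun i : ℕ =>
      ∫ ω, |1 / fwdChain (v 0 ω) (fun k => v k ω) (fun k => u k ω) (i + 1)
        - 1 / fwdChainT (v 0 ω) (fun k => v k ω) (fun k => u k ω) i| ∂μ) := by
  classical
  set wmax := W.max' hWne with hwmaxdef
  set wmin := W.min' hWne with hwmindef
  have hmaxmem := W.max'_mem hWne
  have hminmem := W.min'_mem hWne
  have hminpos : 0 < wmin := hWpos _ hminmem
  have hmaxpos : 0 < wmax := hWpos _ hmaxmem
  set C : ℝ := 1 / wmin - 1 / wmax with hCdef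
  have hC0 : 0 ≤ C :=
    sub_nonneg.2 (one_div_le_one_div_of_le hminpos (W.min'_le _ hmaxmem))
  -- bounds on reciprocals of elements of W
  have hrec : ∀ x ∈ W, 1 / wmax ≤ 1 / x ∧ 1 / x ≤ 1 / wmin := fun x hx =>
    ⟨one_div_le_one_div_of_le (hWpos x hx) (W.le_max' x hx),
     one_div_le_one_div_of_le hminpos (W.min'_le x hx)⟩
  have hsetj : ∀ j : ℕ, {ω | v j ω = wmax} = (v j) ⁻¹' {wmax} := fun j => rfl
  have hmeq : ∀ j : ℕ, μ ((v j) ⁻¹' {wmax}) = μ ((v 1) ⁻¹' {wmax}) := by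
    intro j
    rw [(hident j).measure_mem_eq (measurableSet_singleton _),
      ← (hident 1).measure_mem_eq (measurableSet_singleton _)]
  set qE : ENNReal := μ ((v 1) ⁻¹' {wmax}) with hqEdef
  set q : ℝ := qE.toReal with hqdef
  have hqE_le : qE ≤ 1 := prob_le_one
  have hq_pos : 0 < q := by
    refine ENNReal.toReal_pos (ne_of_gt ?_) (measure_ne_top μ _)
    rw [← hmeq 0]
    exact hatom wmax hmaxmem
  have hq_le : q ≤ 1 := by
    rw [hqdef, ← ENNReal.toReal_one]
    exact ENNReal.toReal_mono ENNReal.one_ne_top hqE_le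
  have h1q : (1 - qE).toReal = 1 - q := by
    rw [ENNReal.toReal_sub_of_le hqE_le ENNReal.one_ne_top, ENNReal.toReal_one]
  have key : ∀ i : ℕ, 2 ≤ i →
      ∫ ω, |1 / fwdChain (v 0 ω) (fun k => v k ω) (fun k => u k ω) i
        - 1 / fwdChainT (v 0 ω) (fun k => v k ω) (fun k => u k ω) (i - 1)| ∂μ
      ≤ (1 - q) ^ (i - 1) * C := by
    intro i hi
    obtain ⟨m, rfl⟩ : ∃ m, i = m + 2 := ⟨i - 2, by omega⟩
    set bad : Set Ω := ⋂ j ∈ Finset.Icc 2 (m + 2), (v j) ⁻¹' ({wmax}ᶜ) with hbaddef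
    have hbadm : MeasurableSet bad := by
      refine MeasurableSet.biInter (Set.to_countable _) fun j _ =>
        (hvmeas j) (measurableSet_singleton _).compl
    have hpt : ∀ ω,
        |1 / fwdChain (v 0 ω) (fun k => v k ω) (fun k => u k ω) (m + 2)
          - 1 / fwdChainT (v 0 ω) (fun k => v k ω) (fun k => u k ω) (m + 2 - 1)|
        ≤ bad.indicator (fun _ => C) ω := by
      intro ω
      by_cases hω : ω ∈ bad
      · rw [Set.indicator_of_mem hω]
        have h1 := hrec _ (fwdChain_mem (hvW 0 ω) (fun k => hvW k ω)
          (v := fun k => v k ω) (u := fun k => u k ω) (m + 2))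
        have h2 := hrec _ (fwdChainT_mem (hvW 0 ω) (fun k => hvW k ω)
          (v := fun k => v k ω) (u := fun k => u k ω) (m + 2 - 1))
        rw [abs_sub_le_iff]
        constructor <;> [skip; skip] <;> · rw [hCdef]; linarith [h1.1, h1.2, h2.1, h2.2]
      · rw [Set.indicator_of_notMem hω]
        have : ∃ j ∈ Finset.Icc 2 (m + 2), v j ω = wmax := by
          by_contra hcon
          push_neg at hcon
          exact hω (Set.mem_biInter fun j hj => hcon j hj)
        obtain ⟨j, hjmem, hjeq⟩ := this
        rw [Finset.mem_Icc] at hjmem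
        obtain ⟨k, rfl⟩ : ∃ k, j = k + 2 := ⟨j - 2, by omega⟩
        have hcoupled := fce_coupled hWpos (fun x hx => W.le_max' x hx)
          (hvW 0 ω) (fun k => hvW k ω) (fun k => (hu k ω).2) hjeq m (by omega)
        show |1 / fwdChain (v 0 ω) (fun k => v k ω) (fun k => u k ω) (m + 2)
          - 1 / fwdChainT (v 0 ω) (fun k => v k ω) (fun k => u k ω) (m + 1)| ≤ 0
        rw [hcoupled, sub_self, abs_zero]
    have hint : Integrable (bad.indicator fun _ => C) μ :=
      (integrable_const C).indicator hbadm
    have hmono : ∫ ω, |1 / fwdChain (v 0 ω) (fun k => v k ω) (fun k => u k ω) (m + 2)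
          - 1 / fwdChainT (v 0 ω) (fun k => v k ω) (fun k => u k ω) (m + 2 - 1)| ∂μ
        ≤ ∫ ω, bad.indicator (fun _ => C) ω ∂μ :=
      integral_mono_of_nonneg (ae_of_all _ fun ω => abs_nonneg _) hint (ae_of_all _ hpt)
    rw [integral_indicator_const C hbadm] at hmono
    have hprod : μ bad = (1 - qE) ^ (m + 1) := by
      rw [hbaddef, hindep.measure_inter_preimage_eq_mul (Finset.Icc 2 (m + 2))
        (sets := fun _ => ({wmax}ᶜ)) (fun j _ => (measurableSet_singleton _).compl)]
      have hfac : ∀ j ∈ Finset.Icc 2 (m + 2), μ ((v j) ⁻¹' {wmax}ᶜ) = 1 - qE := by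
        intro j _
        rw [Set.preimage_compl,
          measure_compl ((hvmeas j) (measurableSet_singleton _)) (measure_ne_top μ _),
          measure_univ, hmeq j]
      rw [Finset.prod_congr rfl hfac, Finset.prod_const, Nat.card_Icc]
      congr 1
    calc _ ≤ (μ bad).toReal • C := hmono
      _ = (1 - q) ^ (m + 2 - 1) * C := by
          rw [hprod, smul_eq_mul, ENNReal.toReal_pow, h1q]
          norm_num
  refine ⟨fun i hi => key i hi, ?_⟩
  rw [← summable_nat_add_iff 1]
  have hgeo : Summable fun i : ℕ => (1 - q) ^ (i + 1) * C := by
    refine Summable.congr (((summable_geometric_of_lt_one (by linarith) (by linarith)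
      (r := 1 - q))).mul_right ((1 - q) * C)) fun i => by ring
  refine hgeo.of_nonneg_of_le (fun i => integral_nonneg fun ω => abs_nonneg _) fun i => ?_
  have := key (i + 2) (by omega)
  simpa using this
end

section
/- Fix i ≥ 1 and let w₀, …, w_i ∈ {2, 4} be such that 2·|{j : 0 ≤ j < i, w_j = 2}| ≥ i (at least half of the first i values equal 2) and w_i = 4. Define S_k = Σ_{j=0}^k w_j and Y_k = (k+1)/S_k. Then Y_i − Y_{i−1} ≤ −1/(9i + 12). -/
open Classical

/-- **Deterministic core of the IAE counterexample.** With weights `w j ∈ {2, 4}` such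
that at least half of `w 0, …, w (i-1)` equal `2` and `w i = 4`, the Increasing Averages
Estimator `Y k = (k+1) / (∑_{j=0}^{k} w j)` satisfies
`Y i - Y (i-1) ≤ -1/(9i + 12)`. -/
theorem iae_counterexample_decrement
    (i : ℕ) (hi : 1 ≤ i) (w : ℕ → ℝ)
    (hw : ∀ j ≤ i, w j = 2 ∨ w j = 4)
    (hhalf : i ≤ 2 * ((Finset.range i).filter (fun j => w j = 2)).card)
    (hwi : w i = 4) :
    ((i : ℝ) + 1) / (∑ j ∈ Finset.range (i + 1), w j)
      - (i : ℝ) / (∑ j ∈ Finset.range i, w j)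
      ≤ -(1 / (9 * (i : ℝ) + 12)) := by
  set S : ℝ := ∑ j ∈ Finset.range i, w j with hS
  set c : ℕ := ((Finset.range i).filter (fun j => w j = 2)).card with hc
  have key : S + 2 * (c : ℝ) = 4 * i := by
    have h1 : (2 : ℝ) * c = ∑ j ∈ Finset.range i, (if w j = 2 then (2:ℝ) else 0) := by
      rw [Finset.sum_ite, Finset.sum_const, Finset.sum_const]
      simp [hc, mul_comm]
    have h2 : ∀ j ∈ Finset.range i, w j + (if w j = 2 then (2:ℝ) else 0) = 4 := by
      intro j hj
      rcases hw j (Nat.le_of_lt (Finset.mem_range.mp hj)) with h | h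
      · simp [h]; norm_num
      · simp [h]
    calc S + 2 * (c : ℝ) = ∑ j ∈ Finset.range i, (w j + if w j = 2 then (2:ℝ) else 0) := by
          rw [Finset.sum_add_distrib, h1]
      _ = ∑ j ∈ Finset.range i, (4 : ℝ) := Finset.sum_congr rfl h2
      _ = 4 * i := by simp [mul_comm]
  have hS2 : 2 * (i : ℝ) ≤ S := by
    have : ∀ j ∈ Finset.range i, (2 : ℝ) ≤ w j := by
      intro j hj
      rcases hw j (Nat.le_of_lt (Finset.mem_range.mp hj)) with h | h <;> rw [h] <;> norm_num
    calc 2 * (i : ℝ) = ∑ _j ∈ Finset.range i, (2 : ℝ) := by simp [mul_comm]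
      _ ≤ S := Finset.sum_le_sum this
  have hS3 : S ≤ 3 * i := by
    have hcr : (i : ℝ) ≤ 2 * c := by exact_mod_cast hhalf
    linarith [key]
  have hsum : ∑ j ∈ Finset.range (i + 1), w j = S + 4 := by
    rw [Finset.sum_range_succ, hwi]
  have hir : (1 : ℝ) ≤ i := by exact_mod_cast hi
  have hSpos : 0 < S := by linarith
  have hS4 : (0:ℝ) < S + 4 := by linarith
  have hd : (0:ℝ) < 9 * (i:ℝ) + 12 := by linarith
  rw [hsum, div_sub_div _ _ (ne_of_gt hS4) (ne_of_gt hSpos), neg_div' ]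
  rw [div_le_div_iff₀ (by positivity) hd]
  nlinarith [sq_nonneg (S - 3*i), mul_pos hSpos hS4]
end

section
/- Let w₀, w₁, w₂, … be i.i.d. random variables uniform on {2, 4}, and define the Increasing Averages Estimator Y_i = (i+1)/(Σ_{j=0}^i w_j). Then for every i ≥ 1, E[|Y_i − Y_{i−1}|] ≥ 1/(36i + 48), and consequently E[|Y_0| + Σ_{i=1}^∞ |Y_i − Y_{i−1}|] = ∞; that is, the Russian roulette integrability condition fails for the Increasing Averages Estimator in this example. -/
open MeasureTheory ProbabilityTheory Finset
open scoped ENNReal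

namespace IAEAux

noncomputable def h : ℝ → ℝ := fun x => if x = 4 then 1 else -1

lemma h_meas : Measurable h :=
  Measurable.ite (measurableSet_singleton 4) measurable_const measurable_const

variable {Ω : Type*} [MeasurableSpace Ω] {μ : Measure Ω} [IsProbabilityMeasure μ]
  {w : ℕ → Ω → ℝ}

lemma ae_two_or_four (hmeas : ∀ k, Measurable (w k))
    (hlaw : ∀ k, μ {ω | w k ω = 2} = 1 / 2 ∧ μ {ω | w k ω = 4} = 1 / 2) (k : ℕ) :
    ∀ᵐ ω ∂μ, w k ω = 2 ∨ w k ω = 4 := by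
  have hA : MeasurableSet {ω | w k ω = 2} := (hmeas k) (measurableSet_singleton 2)
  have hB : MeasurableSet {ω | w k ω = 4} := (hmeas k) (measurableSet_singleton 4)
  have hd : Disjoint {ω | w k ω = 2} {ω | w k ω = 4} := by
    rw [Set.disjoint_left]
    rintro ω h2 h4
    simp only [Set.mem_setOf_eq] at h2 h4
    rw [h2] at h4; norm_num at h4
  have hu : μ ({ω | w k ω = 2} ∪ {ω | w k ω = 4}) = 1 := by
    rw [measure_union hd hB, (hlaw k).1, (hlaw k).2, ENNReal.add_halves]
  have h0 : μ ({ω | w k ω = 2} ∪ {ω | w k ω = 4})ᶜ = 0 :=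
    (prob_compl_eq_zero_iff (hA.union hB)).2 hu
  have hset : {ω | ¬(w k ω = 2 ∨ w k ω = 4)} = ({ω | w k ω = 2} ∪ {ω | w k ω = 4})ᶜ := by
    ext ω; simp [not_or]
  rw [ae_iff, hset]
  exact h0

lemma integral_comp (hmeas : ∀ k, Measurable (w k))
    (hlaw : ∀ k, μ {ω | w k ω = 2} = 1 / 2 ∧ μ {ω | w k ω = 4} = 1 / 2)
    (k : ℕ) (φ : ℝ → ℝ) :
    Integrable (fun ω => φ (w k ω)) μ ∧ ∫ ω, φ (w k ω) ∂μ = (φ 2 + φ 4) / 2 := by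
  set A : Set Ω := {ω | w k ω = 2} with hAdef
  set B : Set Ω := {ω | w k ω = 4} with hBdef
  have hA : MeasurableSet A := (hmeas k) (measurableSet_singleton 2)
  have hB : MeasurableSet B := (hmeas k) (measurableSet_singleton 4)
  have hcongr : (fun ω => φ (w k ω)) =ᵐ[μ]
      fun ω => A.indicator (fun _ => φ 2) ω + B.indicator (fun _ => φ 4) ω := by
    filter_upwards [ae_two_or_four hmeas hlaw k] with ω hω
    rcases hω with h2 | h4
    · have hBω : ω ∉ B := by simp [hBdef, Set.mem_setOf_eq, h2]
      simp [Set.indicator_apply, hAdef, hBω, Set.mem_setOf_eq, h2]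
    · have hAω : ω ∉ A := by simp [hAdef, Set.mem_setOf_eq, h4]
      simp [Set.indicator_apply, hBdef, hAω, Set.mem_setOf_eq, h4]
  have hint : Integrable
      (fun ω => A.indicator (fun _ => φ 2) ω + B.indicator (fun _ => φ 4) ω) μ :=
    Integrable.add
      ((integrable_const (φ 2)).indicator hA) ((integrable_const (φ 4)).indicator hB)
  have hInt : Integrable (fun ω => φ (w k ω)) μ := hint.congr hcongr.symm
  refine ⟨hInt, ?_⟩
  rw [integral_congr_ae hcongr, integral_add ((integrable_const (φ 2)).indicator hA)
    ((integrable_const (φ 4)).indicator hB)]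
  rw [integral_indicator_const _ hA, integral_indicator_const _ hB, measureReal_def, measureReal_def, (hlaw k).1, (hlaw k).2]
  have h12 : ((1 : ℝ≥0∞) / 2).toReal = (1 : ℝ) / 2 := by
    rw [ENNReal.toReal_div]; norm_num
  rw [h12]
  simp only [smul_eq_mul]
  ring

/-- Key lemma: integrability and lower bound for the increment. -/
lemma key (hmeas : ∀ k, Measurable (w k))
    (hindep : ProbabilityTheory.iIndepFun w μ)
    (hlaw : ∀ k, μ {ω | w k ω = 2} = 1 / 2 ∧ μ {ω | w k ω = 4} = 1 / 2)
    (i : ℕ) (hi : 1 ≤ i) :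
    Integrable (fun ω => |((i : ℝ) + 1) / (∑ j ∈ Finset.range (i + 1), w j ω)
          - (i : ℝ) / (∑ j ∈ Finset.range i, w j ω)|) μ ∧
    1 / (36 * (i : ℝ) + 48) ≤
        ∫ ω, |((i : ℝ) + 1) / (∑ j ∈ Finset.range (i + 1), w j ω)
          - (i : ℝ) / (∑ j ∈ Finset.range i, w j ω)| ∂μ := by
  have hi1 : (1 : ℝ) ≤ (i : ℝ) := by exact_mod_cast hi
  have hipos : (0 : ℝ) < i := by linarith
  set S : Ω → ℝ := fun ω => ∑ j ∈ Finset.range i, w j ω with hSdef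
  set T : Ω → ℝ := fun ω => ∑ j ∈ Finset.range (i + 1), w j ω with hTdef
  have hSmeas : Measurable S := Finset.measurable_sum _ (fun j _ => hmeas j)
  have hTmeas : Measurable T := Finset.measurable_sum _ (fun j _ => hmeas j)
  have hTS : ∀ ω, T ω = S ω + w i ω := by
    intro ω; simp [hSdef, hTdef, Finset.sum_range_succ]
  -- good event
  have hG : ∀ᵐ ω ∂μ, ∀ j, w j ω = 2 ∨ w j ω = 4 :=
    ae_all_iff.2 (fun j => ae_two_or_four hmeas hlaw j)
  -- bounds on good ω
  have hbound : ∀ ω, (∀ j, w j ω = 2 ∨ w j ω = 4) →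
      2 * (i : ℝ) ≤ S ω ∧ S ω ≤ 4 * i ∧ 2 * ((i : ℝ) + 1) ≤ T ω ∧ T ω ≤ 4 * ((i : ℝ) + 1) := by
    intro ω hω
    have h2 : ∀ j, (2 : ℝ) ≤ w j ω := by
      intro j; rcases hω j with h | h <;> rw [h] <;> norm_num
    have h4 : ∀ j, w j ω ≤ (4 : ℝ) := by
      intro j; rcases hω j with h | h <;> rw [h] <;> norm_num
    refine ⟨?_, ?_, ?_, ?_⟩
    · calc 2 * (i : ℝ) = ∑ _j ∈ Finset.range i, (2:ℝ) := by
            simp [Finset.sum_const, Finset.card_range]; ring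
        _ ≤ S ω := Finset.sum_le_sum (fun j _ => h2 j)
    · calc S ω ≤ ∑ _j ∈ Finset.range i, (4:ℝ) := Finset.sum_le_sum (fun j _ => h4 j)
        _ = 4 * i := by simp [Finset.sum_const, Finset.card_range]; ring
    · calc 2 * ((i : ℝ) + 1) = ∑ _j ∈ Finset.range (i+1), (2:ℝ) := by
            simp [Finset.sum_const, Finset.card_range]; push_cast; ring
        _ ≤ T ω := Finset.sum_le_sum (fun j _ => h2 j)
    · calc T ω ≤ ∑ _j ∈ Finset.range (i+1), (4:ℝ) := Finset.sum_le_sum (fun j _ => h4 j)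
        _ = 4 * ((i:ℝ) + 1) := by simp [Finset.sum_const, Finset.card_range]; push_cast; ring
  have hv2 : h 2 = -1 := by norm_num [h]
  have hv4 : h 4 = 1 := by norm_num [h]
  have hval : ∀ ω, (w i ω = 2 → h (w i ω) = -1) ∧ (w i ω = 4 → h (w i ω) = 1) := by
    intro ω
    constructor <;> intro hwi <;> rw [hwi] <;> norm_num [h]
  set g : Ω → ℝ := fun ω => ((i : ℝ) * w i ω - S ω) * h (w i ω) with hgdef
  -- pointwise facts on good ω
  have hgabs : ∀ ω, (∀ j, w j ω = 2 ∨ w j ω = 4) → g ω = |S ω - (i : ℝ) * w i ω| := by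
    intro ω hω
    obtain ⟨hS2, hS4, _, _⟩ := hbound ω hω
    rcases hω i with h2 | h4
    · rw [abs_of_nonneg (by rw [h2]; linarith)]
      simp only [hgdef, h2, hv2]
      ring
    · rw [abs_of_nonpos (by rw [h4]; linarith)]
      simp only [hgdef, h4, hv4]
      ring
  -- pointwise inequality
  have hptwise : ∀ᵐ ω ∂μ, g ω / (16 * (i : ℝ) * ((i : ℝ) + 1)) ≤
      |((i : ℝ) + 1) / T ω - (i : ℝ) / S ω| := by
    filter_upwards [hG] with ω hω
    obtain ⟨hS2, hS4, hT2, hT4⟩ := hbound ω hω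
    have hSpos : 0 < S ω := by linarith
    have hTpos : 0 < T ω := by linarith
    have hdiff : ((i : ℝ) + 1) / T ω - (i : ℝ) / S ω
        = (((i : ℝ) + 1) * S ω - T ω * (i : ℝ)) / (T ω * S ω) :=
      div_sub_div _ _ (ne_of_gt hTpos) (ne_of_gt hSpos)
    have hnum : ((i : ℝ) + 1) * S ω - T ω * (i : ℝ) = S ω - (i : ℝ) * w i ω := by
      rw [hTS]; ring
    rw [hdiff, hnum, abs_div, abs_of_pos (mul_pos hTpos hSpos), ← hgabs ω hω]
    have hg0 : 0 ≤ g ω := by rw [hgabs ω hω]; exact abs_nonneg _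
    have hprod : T ω * S ω ≤ 16 * (i : ℝ) * ((i : ℝ) + 1) := by nlinarith
    have hprodpos : 0 < T ω * S ω := mul_pos hTpos hSpos
    gcongr
  -- integrability of g
  have hgmeas : Measurable g :=
    ((measurable_const.mul (hmeas i)).sub hSmeas).mul (h_meas.comp (hmeas i))
  have hgint : Integrable g μ := by
    refine Integrable.mono' (integrable_const (8 * (i:ℝ))) hgmeas.aestronglyMeasurable ?_
    filter_upwards [hG] with ω hω
    obtain ⟨hS2, hS4, _, _⟩ := hbound ω hω
    rw [Real.norm_eq_abs, abs_le]
    rcases hω i with hwi | hwi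
    · simp only [hgdef, hwi, hv2]
      constructor <;> nlinarith
    · simp only [hgdef, hwi, hv4]
      constructor <;> nlinarith
  -- integrability of diff
  have hdmeas : Measurable (fun ω => |((i : ℝ) + 1) / T ω - (i : ℝ) / S ω|) :=
    ((measurable_const.div hTmeas).sub (measurable_const.div hSmeas)).abs
  have hdint : Integrable (fun ω => |((i : ℝ) + 1) / T ω - (i : ℝ) / S ω|) μ := by
    refine Integrable.mono' (integrable_const 1) hdmeas.aestronglyMeasurable ?_
    filter_upwards [hG] with ω hω
    obtain ⟨hS2, hS4, hT2, hT4⟩ := hbound ω hω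
    have hSpos : 0 < S ω := by linarith
    have hTpos : 0 < T ω := by linarith
    rw [Real.norm_eq_abs, abs_abs, abs_le]
    have e1 : ((i:ℝ)+1) / T ω ≤ 1/2 := by
      rw [div_le_iff₀ hTpos]; linarith
    have e2 : (0:ℝ) ≤ ((i:ℝ)+1) / T ω := by positivity
    have e3 : (i:ℝ) / S ω ≤ 1/2 := by
      rw [div_le_iff₀ hSpos]; linarith
    have e4 : (0:ℝ) ≤ (i:ℝ) / S ω := by positivity
    constructor <;> linarith
  -- compute ∫ g
  have hwh := integral_comp hmeas hlaw i (fun x => x * h x)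
  have hh := integral_comp hmeas hlaw i h
  have hhval : ∫ ω, h (w i ω) ∂μ = 0 := by
    rw [hh.2]; norm_num [h]
  have hwhval : ∫ ω, w i ω * h (w i ω) ∂μ = 1 := by
    rw [hwh.2]; norm_num [h]
  have hSeq : S = ∑ j ∈ Finset.range i, w j := by
    funext ω; rw [hSdef]; simp
  have hindepST : IndepFun S (fun ω => h (w i ω)) μ := by
    rw [hSeq]
    exact (hindep.indepFun_sum_range_succ hmeas i).comp measurable_id h_meas
  have hShint : Integrable (fun ω => S ω * h (w i ω)) μ := by
    refine Integrable.mono' (integrable_const (4 * (i:ℝ)))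
      (hSmeas.mul (h_meas.comp (hmeas i))).aestronglyMeasurable ?_
    filter_upwards [hG] with ω hω
    obtain ⟨hS2, hS4, _, _⟩ := hbound ω hω
    rw [Real.norm_eq_abs, abs_le]
    rcases hω i with hwi | hwi
    · rw [(hval ω).1 hwi]
      constructor <;> nlinarith
    · rw [(hval ω).2 hwi]
      constructor <;> nlinarith
  have hShval : ∫ ω, S ω * h (w i ω) ∂μ = 0 := by
    have hmul := hindepST.integral_mul_eq_mul_integral hSmeas.aestronglyMeasurable
      (h_meas.comp (hmeas i)).aestronglyMeasurable
    simp only [Pi.mul_apply] at hmul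
    rw [hmul, hhval, mul_zero]
  have hgval : ∫ ω, g ω ∂μ = i := by
    have hexp : ∀ ω, g ω = (i : ℝ) * (w i ω * h (w i ω)) - S ω * h (w i ω) := by
      intro ω; simp only [hgdef]; ring
    calc ∫ ω, g ω ∂μ = ∫ ω, ((i : ℝ) * (w i ω * h (w i ω)) - S ω * h (w i ω)) ∂μ := by
          exact integral_congr_ae (Filter.Eventually.of_forall hexp)
      _ = (i : ℝ) * ∫ ω, w i ω * h (w i ω) ∂μ - ∫ ω, S ω * h (w i ω) ∂μ := by
          rw [integral_sub (Integrable.const_mul hwh.1 _) hShint, integral_const_mul]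
      _ = (i : ℝ) := by rw [hwhval, hShval]; ring
  refine ⟨hdint, ?_⟩
  have hstep : ∫ ω, g ω / (16 * (i : ℝ) * ((i : ℝ) + 1)) ∂μ ≤
      ∫ ω, |((i : ℝ) + 1) / T ω - (i : ℝ) / S ω| ∂μ :=
    integral_mono_ae (hgint.div_const _) hdint hptwise
  have hlhs : ∫ ω, g ω / (16 * (i : ℝ) * ((i : ℝ) + 1)) ∂μ
      = (i : ℝ) / (16 * (i : ℝ) * ((i : ℝ) + 1)) := by
    rw [integral_div, hgval]
  rw [hlhs] at hstep
  refine le_trans ?_ hstep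
  rw [div_le_div_iff₀ (by positivity) (by positivity)]
  nlinarith

end IAEAux

namespace IAEAux

lemma tsum_bound_top : ∑' i : ℕ, ENNReal.ofReal (1 / (36 * ((i : ℝ) + 1) + 48)) = ⊤ := by
  by_contra hne
  have hsum0 := ENNReal.summable_toReal hne
  have hsum : Summable (fun i : ℕ => 1 / (36 * ((i : ℝ) + 1) + 48)) := by
    refine hsum0.congr (fun i => ?_)
    rw [ENNReal.toReal_ofReal (by positivity)]
  have h2 : Summable (fun i : ℕ => (1 : ℝ) / 120 * (1 / ((i : ℝ) + 1))) := by
    refine Summable.of_nonneg_of_le (fun i => by positivity) (fun i => ?_) hsum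
    have hre : (1:ℝ)/120 * (1/((i:ℝ)+1)) = 1/(120*((i:ℝ)+1)) := by rw [div_mul_div_comm]; norm_num
    rw [hre, div_le_div_iff₀ (by positivity) (by positivity)]
    push_cast
    nlinarith [Nat.cast_nonneg (α := ℝ) i]
  have h3 : Summable (fun i : ℕ => 1 / ((i : ℝ) + 1)) :=
    (summable_mul_left_iff (by norm_num : (1:ℝ)/120 ≠ 0)).mp h2
  have h4 : Summable (fun n : ℕ => 1 / (((n + 1 : ℕ) : ℝ))) := by
    refine h3.congr (fun n => ?_)
    push_cast; ring
  exact Real.not_summable_one_div_natCast ((summable_nat_add_iff 1).1 h4)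

end IAEAux

/-- **The Increasing Averages Estimator violates the roulette integrability condition.**
For i.i.d. weights uniform on `{2, 4}` and `Y i = (i+1)/(∑_{j=0}^{i} w j)`, for every
`i ≥ 1` we have `E[|Y i - Y (i-1)|] ≥ 1/(36 i + 48)`, and consequently
`E[|Y 0| + ∑_{i≥1} |Y i - Y (i-1)|] = ∞`. -/
theorem iae_integrability_fails
    {Ω : Type*} [MeasurableSpace Ω] (μ : Measure Ω) [IsProbabilityMeasure μ]
    (w : ℕ → Ω → ℝ) (hmeas : ∀ k, Measurable (w k))
    (hindep : ProbabilityTheory.iIndepFun w μ)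
    (hlaw : ∀ k, μ {ω | w k ω = 2} = 1 / 2 ∧ μ {ω | w k ω = 4} = 1 / 2) :
    (∀ i : ℕ, 1 ≤ i →
      1 / (36 * (i : ℝ) + 48) ≤
        ∫ ω, |((i : ℝ) + 1) / (∑ j ∈ Finset.range (i + 1), w j ω)
          - (i : ℝ) / (∑ j ∈ Finset.range i, w j ω)| ∂μ) ∧
    ∫⁻ ω, (ENNReal.ofReal |(1 : ℝ) / (∑ j ∈ Finset.range 1, w j ω)|
      + ∑' i : ℕ, ENNReal.ofReal
          |((i : ℝ) + 2) / (∑ j ∈ Finset.range (i + 2), w j ω)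
            - ((i : ℝ) + 1) / (∑ j ∈ Finset.range (i + 1), w j ω)|) ∂μ = ⊤ := by
  constructor
  · exact fun i hi => (IAEAux.key hmeas hindep hlaw i hi).2
  set F : ℕ → Ω → ℝ := fun n ω => |((n : ℝ) + 1) / (∑ j ∈ Finset.range (n + 1), w j ω)
          - (n : ℝ) / (∑ j ∈ Finset.range n, w j ω)| with hFdef
  have hFmeas : ∀ n : ℕ, Measurable (F n) := fun n =>
    ((measurable_const.div (Finset.measurable_sum _ fun j _ => hmeas j)).sub
      (measurable_const.div (Finset.measurable_sum _ fun j _ => hmeas j))).abs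
  have hcast : ∀ (i : ℕ) (ω : Ω),
      |((i : ℝ) + 2) / (∑ j ∈ Finset.range (i + 2), w j ω)
            - ((i : ℝ) + 1) / (∑ j ∈ Finset.range (i + 1), w j ω)| = F (i + 1) ω := by
    intro i ω
    simp only [hFdef]
    push_cast
    ring_nf
  have hkey : ∀ i : ℕ, ENNReal.ofReal (1 / (36 * ((i : ℝ) + 1) + 48)) ≤
      ∫⁻ ω, ENNReal.ofReal (F (i + 1) ω) ∂μ := by
    intro i
    obtain ⟨hint, hbnd⟩ := IAEAux.key hmeas hindep hlaw (i + 1) (by omega)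
    have heq : ENNReal.ofReal (∫ ω, F (i + 1) ω ∂μ) = ∫⁻ ω, ENNReal.ofReal (F (i + 1) ω) ∂μ :=
      ofReal_integral_eq_lintegral_ofReal hint
        (Filter.Eventually.of_forall (fun ω => abs_nonneg _))
    rw [← heq]
    refine ENNReal.ofReal_le_ofReal ?_
    refine le_trans (le_of_eq ?_) hbnd
    push_cast
    ring_nf
  have htop : (⊤ : ℝ≥0∞) ≤ ∫⁻ ω, (ENNReal.ofReal |(1 : ℝ) / (∑ j ∈ Finset.range 1, w j ω)|
      + ∑' i : ℕ, ENNReal.ofReal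
          |((i : ℝ) + 2) / (∑ j ∈ Finset.range (i + 2), w j ω)
            - ((i : ℝ) + 1) / (∑ j ∈ Finset.range (i + 1), w j ω)|) ∂μ := by
    calc (⊤ : ℝ≥0∞) = ∑' i : ℕ, ENNReal.ofReal (1 / (36 * ((i : ℝ) + 1) + 48)) :=
          IAEAux.tsum_bound_top.symm
      _ ≤ ∑' i : ℕ, ∫⁻ ω, ENNReal.ofReal (F (i + 1) ω) ∂μ := ENNReal.tsum_le_tsum hkey
      _ = ∫⁻ ω, ∑' i : ℕ, ENNReal.ofReal (F (i + 1) ω) ∂μ :=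
          (lintegral_tsum (fun i => (ENNReal.measurable_ofReal.comp
            (hFmeas (i + 1))).aemeasurable)).symm
      _ ≤ _ := by
          refine lintegral_mono (fun ω => ?_)
          have : ∑' i : ℕ, ENNReal.ofReal
              |((i : ℝ) + 2) / (∑ j ∈ Finset.range (i + 2), w j ω)
                - ((i : ℝ) + 1) / (∑ j ∈ Finset.range (i + 1), w j ω)|
              = ∑' i : ℕ, ENNReal.ofReal (F (i + 1) ω) :=
            tsum_congr (fun i => by rw [hcast i ω])
          rw [← this]
          exact le_add_self
  exact top_le_iff.mp htop
end

section
/- Let μ be a σ-finite measure on a measurable space 𝒳, let Q : 𝒳 → [0,∞) and P* : 𝒳 → [0,∞) be measurable with ∫ Q dμ = 1 and ∫ P* dμ = Z for some Z ∈ (0,∞). Fix m ≥ 1 and define on 𝒳^m the function P*_m(x₁, …, x_m) = (1/m) Σ_{i=1}^m P*(x_i) Π_{j ≠ i} Q(x_j). Then ∫ P*_m d(μ^{⊗m}) = Z; that is, the averaged-weight augmented target P*_m has the same normalizing constant Z as P*. -/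
open MeasureTheory

/-- **The averaged-weight augmented target has the same normalizer.** If `∫ Q dμ = 1` and
`∫ P* dμ = Z`, then the augmented unnormalized target
`P*_m(x₁, …, x_m) = (1/m) ∑ᵢ P*(xᵢ) ∏_{j ≠ i} Q(xⱼ)` on `𝒳^m` satisfies
`∫ P*_m d(μ^⊗m) = Z`. -/
theorem augmented_target_normalizer
    {X : Type*} [MeasurableSpace X] (μ : Measure X) [SigmaFinite μ]
    (Q Pstar : X → ℝ) (hQmeas : Measurable Q) (hPmeas : Measurable Pstar)
    (hQnn : ∀ x, 0 ≤ Q x) (hPnn : ∀ x, 0 ≤ Pstar x)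
    (hQint : ∫ x, Q x ∂μ = 1)
    (Z : ℝ) (hZpos : 0 < Z) (hPint : ∫ x, Pstar x ∂μ = Z)
    (m : ℕ) (hm : 1 ≤ m) :
    ∫ x : Fin m → X,
        (1 / (m : ℝ)) * ∑ i : Fin m, Pstar (x i) * ∏ j ∈ Finset.univ.erase i, Q (x j)
      ∂(Measure.pi fun _ : Fin m => μ) = Z := by
  letI : MeasureSpace X := ⟨μ⟩
  have hμ : (Measure.pi fun _ : Fin m => μ) = (volume : Measure (Fin m → X)) := by
    rfl
  have hQI : Integrable Q μ := by
    by_contra h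
    rw [integral_undef h] at hQint
    exact one_ne_zero hQint.symm
  have hPI : Integrable Pstar μ := by
    by_contra h
    rw [integral_undef h] at hPint
    exact hZpos.ne' hPint.symm
  -- rewrite each summand as a full product
  set f : Fin m → Fin m → X → ℝ := fun i j => if j = i then Pstar else Q with hf
  have hterm : ∀ (i : Fin m) (x : Fin m → X),
      Pstar (x i) * ∏ j ∈ Finset.univ.erase i, Q (x j) = ∏ j, f i j (x j) := by
    intro i x
    rw [← Finset.prod_erase_mul Finset.univ _ (Finset.mem_univ i)]
    simp only [hf, if_pos rfl, mul_comm]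
    congr 1
    exact Finset.prod_congr rfl fun j hj => by
      rw [if_neg (Finset.ne_of_mem_erase hj)]
  have hfI : ∀ i j, Integrable (f i j) μ := by
    intro i j
    by_cases h : j = i <;> simp [hf, h, hQI, hPI]
  have hint : ∀ i : Fin m, Integrable (fun x : Fin m → X => ∏ j, f i j (x j))
      (Measure.pi fun _ : Fin m => μ) := by
    intro i
    rw [hμ]
    exact Integrable.fintype_prod (fun j => hfI i j)
  have hval : ∀ i : Fin m, (∫ x : Fin m → X, ∏ j, f i j (x j)
      ∂(Measure.pi fun _ : Fin m => μ)) = Z := by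
    intro i
    rw [hμ]
    rw [integral_fintype_prod_volume_eq_prod (ι := Fin m) (fun j => f i j)]
    have : ∀ j : Fin m, (∫ x, f i j x) = if j = i then Z else 1 := by
      intro j
      by_cases h : j = i
      · simp only [hf, h, if_true]; exact hPint
      · simp only [hf, if_neg h]; exact hQint
    simp [this]
  calc ∫ x : Fin m → X,
        (1 / (m : ℝ)) * ∑ i : Fin m, Pstar (x i) * ∏ j ∈ Finset.univ.erase i, Q (x j)
      ∂(Measure.pi fun _ : Fin m => μ)
      = (1 / (m : ℝ)) * ∫ x : Fin m → X,
          ∑ i : Fin m, ∏ j, f i j (x j) ∂(Measure.pi fun _ : Fin m => μ) := by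
        rw [integral_const_mul]
        congr 1
        refine integral_congr_ae (Filter.Eventually.of_forall fun x => ?_)
        exact Finset.sum_congr rfl fun i _ => hterm i x
    _ = (1 / (m : ℝ)) * ∑ i : Fin m, ∫ x : Fin m → X,
          ∏ j, f i j (x j) ∂(Measure.pi fun _ : Fin m => μ) := by
        rw [integral_finset_sum _ (fun i _ => hint i)]
    _ = Z := by
        simp only [hval, Finset.sum_const, Finset.card_univ, Fintype.card_fin, nsmul_eq_mul]
        rw [← mul_assoc, one_div, inv_mul_cancel₀, one_mul]
        exact Nat.cast_ne_zero.mpr (by omega)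
end
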